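/- In the standard Z^n-quiver with vertex set Z^n, where for i=1,…,n the type-i arrows are translations by the standard basis vector e_i and type-0 arrows are translations by (−1,…,−1): given vertices z_0,…,z_m and sets of arrow types I_0,…,I_m with empty total intersection, the intersection of the cones C_{I_j}(z_j) is finite, where C_I(z) is the set of endpoints of paths leaving z using only arrow types in I. -/

import Mathlib

open CategoryTheory CategoryTheory.Limits

universe u v

/-- A quiver with arrows partitioned into `n+1` arrow types. -/
structure TypedQuiver (n : ℕ) where
  V : Type
  E : Type
  src : E → V
  tgt : E → V
  typ : E → Fin (n + 1)

namespace TypedQuiver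

variable {n : ℕ}

/-- Paths in a typed quiver. -/
inductive Path (Q : TypedQuiver n) : Q.V → Q.V → Type where
  | nil (v : Q.V) : Path Q v v
  | cons {u : Q.V} (e : Q.E) (γ : Path Q u (Q.src e)) : Path Q u (Q.tgt e)

namespace Path

variable {Q : TypedQuiver n}

/-- Length of a path. -/
def length : ∀ {u w : Q.V}, Q.Path u w → ℕ
  | _, _, nil _ => 0
  | _, _, cons _ γ => length γ + 1

/-- The number of arrows of a given type in a path. -/
def count : ∀ {u w : Q.V}, Q.Path u w → Fin (n + 1) → ℕ
  | _, _, nil _, _ => 0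
  | _, _, cons e γ, t => count γ t + (if Q.typ e = t then 1 else 0)

/-- Concatenation of paths. -/
def comp : ∀ {u w x : Q.V}, Q.Path u w → Q.Path w x → Q.Path u x
  | _, _, _, γ, nil _ => γ
  | _, _, _, γ, cons e δ => cons e (comp γ δ)

/-- A path is admissible if some arrow type does not occur in it. -/
def Admissible {u w : Q.V} (γ : Q.Path u w) : Prop := ∃ t, γ.count t = 0

/-- A path is simple if each arrow type occurs at most once. -/
def Simple {u w : Q.V} (γ : Q.Path u w) : Prop := ∀ t, γ.count t ≤ 1

/-- A maximal simple path: each arrow type occurs exactly once. -/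
def MaximalSimple {u w : Q.V} (γ : Q.Path u w) : Prop := ∀ t, γ.count t = 1

/-- The essential type of a path: the set of arrow types occurring in it. -/
def essType {u w : Q.V} (γ : Q.Path u w) : Set (Fin (n + 1)) := {t | 0 < γ.count t}

end Path

/-- A `ℤⁿ`-structure on a typed quiver. -/
structure IsZn (Q : TypedQuiver n) : Prop where
  npos : 0 < n
  nonempty : Nonempty Q.V
  unique_out : ∀ (v : Q.V) (t : Fin (n + 1)), ∃! e : Q.E, Q.src e = v ∧ Q.typ e = t
  connected : ∀ u w : Q.V, ∃ γ : Q.Path u w, γ.Admissible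
  circuit : ∀ (u w : Q.V) (γ : Q.Path u w), γ.MaximalSimple → u = w
  same_type : ∀ (u w x : Q.V) (γ : Q.Path u w) (μ : Q.Path u x),
      γ.Admissible → μ.Admissible → (w = x ↔ γ.count = μ.count)

/-- Two distinct vertices are neighbors if an admissible simple path connects them. -/
def Neighbors (Q : TypedQuiver n) (u w : Q.V) : Prop :=
  u ≠ w ∧ ∃ γ : Q.Path u w, γ.Admissible ∧ γ.Simple

/-- The hull of a set of vertices. -/
def hull (Q : TypedQuiver n) (H : Set Q.V) : Set Q.V :=
  {v | ∀ t : Fin (n + 1), ∃ z ∈ H, ∃ γ : Q.Path z v, γ.count t = 0}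

/-- A representation of a typed quiver in a category. -/
structure Rep (Q : TypedQuiver n) (C : Type u) [Category.{v} C] where
  obj : Q.V → C
  map : ∀ e : Q.E, obj (Q.src e) ⟶ obj (Q.tgt e)

namespace Rep

variable {Q : TypedQuiver n} {C : Type u} [Category.{v} C]

/-- The composition of the maps of a representation along a path. -/
def mapPath (𝔙 : Q.Rep C) : ∀ {u w : Q.V}, Q.Path u w → (𝔙.obj u ⟶ 𝔙.obj w)
  | _, _, .nil _ => 𝟙 _
  | _, _, .cons e γ => mapPath 𝔙 γ ≫ 𝔙.map e

end Rep

/-- A weakly linked net over a `ℤⁿ`-quiver. -/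
structure IsWeaklyLinked (k : Type) [Field k] {Q : TypedQuiver n} {C : Type u}
    [Category.{v} C] [Preadditive C] [CategoryTheory.Linear k C] (𝔙 : Q.Rep C) : Prop where
  scalar : ∀ (u w : Q.V) (γ₁ γ₂ : Q.Path u w), γ₂.Admissible →
      ∃ c : k, c ≠ 0 ∧ 𝔙.mapPath γ₁ = c • 𝔙.mapPath γ₂
  circuit : ∀ (u w : Q.V) (γ : Q.Path u w), γ.MaximalSimple → 𝔙.mapPath γ = 0

section Abelian

variable {Q : TypedQuiver n} {C : Type u} [Category.{v} C] [Abelian C]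

/-- A linked net: kernels along admissible paths with disjoint essential types meet trivially. -/
def IsLinked (𝔙 : Q.Rep C) : Prop :=
  ∀ (u w x : Q.V) (γ₁ : Q.Path u w) (γ₂ : Q.Path u x), γ₁.Admissible → γ₂.Admissible →
    γ₁.essType ∩ γ₂.essType = ∅ →
    kernelSubobject (𝔙.mapPath γ₁) ⊓ kernelSubobject (𝔙.mapPath γ₂) = ⊥

/-- Exactness: `Ker φ^u_w = Im φ^w_u` for neighboring vertices. -/
def IsExact (𝔙 : Q.Rep C) : Prop :=
  ∀ (u w : Q.V), Q.Neighbors u w → ∀ (γ : Q.Path u w) (μ : Q.Path w u),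
    γ.Admissible → μ.Admissible →
    kernelSubobject (𝔙.mapPath γ) = imageSubobject (𝔙.mapPath μ)

/-- Binary: each associated map is zero or a monomorphism. -/
def IsBinary (𝔙 : Q.Rep C) : Prop :=
  ∀ (u w : Q.V) (γ : Q.Path u w), 𝔙.mapPath γ = 0 ∨ Mono (𝔙.mapPath γ)

/-- Pure: each epimorphism among the associated maps is an isomorphism. -/
def IsPure (𝔙 : Q.Rep C) : Prop :=
  ∀ (u w : Q.V) (γ : Q.Path u w), Epi (𝔙.mapPath γ) → IsIso (𝔙.mapPath γ)

/-- Locally finite: compositions along long enough arriving paths vanish. -/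
def LocallyFinite (𝔙 : Q.Rep C) : Prop :=
  ∀ v : Q.V, ∃ ℓ : ℕ, ∀ (u : Q.V) (γ : Q.Path u v), ℓ < γ.length → 𝔙.mapPath γ = 0

/-- Faithfully generated by a vertex `w`: `φ^w_v` is an isomorphism for every `v`. -/
def FaithfullyGeneratedBy (𝔙 : Q.Rep C) (w : Q.V) : Prop :=
  ∀ (v : Q.V) (γ : Q.Path w v), γ.Admissible → IsIso (𝔙.mapPath γ)

/-- Generated by a set `H`: the images of compositions along paths from `H` to `v` sum
to the whole object at `v` (stated via upper bounds of subobjects). -/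
def GeneratedBy (𝔙 : Q.Rep C) (H : Set Q.V) : Prop :=
  ∀ v : Q.V, ∀ W : Subobject (𝔙.obj v),
    (∀ z ∈ H, ∀ γ : Q.Path z v, imageSubobject (𝔙.mapPath γ) ≤ W) → W = ⊤

/-- 1-generated by a set `H`. -/
def OneGeneratedBy (𝔙 : Q.Rep C) (H : Set Q.V) : Prop :=
  ∀ v : Q.V, ∃ w ∈ H, ∃ γ : Q.Path w v, γ.Admissible ∧ Epi (𝔙.mapPath γ)

/-- A subobject-valued sum being everything, stated via upper bounds. -/
def SumTop {X : C} (S : Set (Subobject X)) : Prop :=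
  ∀ W : Subobject X, (∀ s ∈ S, s ≤ W) → W = ⊤

/-- A primitive vertex for a net: the images of the maps of arrows arriving at `w` do
not sum to the whole object. -/
def Primitive (𝔙 : Q.Rep C) (w : Q.V) : Prop :=
  ¬ SumTop {s : Subobject (𝔙.obj w) | ∃ (e : Q.E) (h : Q.tgt e = w),
      s = imageSubobject (𝔙.map e ≫ eqToHom (congrArg 𝔙.obj h))}

/-- The intersection property at a vertex `v`, where `K v I` denotes `Ker φ^v_I`. -/
def IntersectionProp (𝔙 : Q.Rep C)
    (K : ∀ v : Q.V, Set (Fin (n + 1)) → Subobject (𝔙.obj v)) (v : Q.V) : Prop :=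
  ∀ (m : ℕ) (I : Fin (m + 1) → Set (Fin (n + 1))),
    (Finset.univ.sup fun ℓ : Fin m => K v (I ℓ.succ)) ⊓ K v (I 0)
      = Finset.univ.sup fun ℓ : Fin m => K v (I ℓ.succ ∩ I 0)

end Abelian

end TypedQuiver
/-- The displacement vector of an arrow of type `t` in the standard `ℤⁿ`-quiver:
type `0` is translation by `(−1,…,−1)`, and type `i+1` is translation by `eᵢ`. -/
def stdStep (n : ℕ) (t : Fin (n + 1)) : Fin n → ℤ :=
  if t = 0 then (fun _ => -1) else fun j => if (t : ℕ) = (j : ℕ) + 1 then 1 else 0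

/-- The standard `ℤⁿ`-quiver on the vertex set `ℤⁿ`. -/
def stdQuiver (n : ℕ) : TypedQuiver n where
  V := Fin n → ℤ
  E := (Fin n → ℤ) × Fin (n + 1)
  src e := e.1
  tgt e := e.1 + stdStep n e.2
  typ e := e.2

/-- The `I`-cone of `z`: endpoints of paths leaving `z` using only arrow types in `I`. -/
def cone {n : ℕ} (I : Set (Fin (n + 1))) (z : Fin n → ℤ) : Set (Fin n → ℤ) :=
  {x | ∃ γ : (stdQuiver n).Path z x, ∀ t, t ∉ I → γ.count t = 0}

lemma path_disp {n : ℕ} : ∀ {z x : Fin n → ℤ} (γ : (stdQuiver n).Path z x),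
    x = z + ∑ t : Fin (n + 1), (γ.count t : ℤ) • stdStep n t := by
  intro z x γ
  have key : ∀ {z x : (stdQuiver n).V} (γ : (stdQuiver n).Path z x),
      @Eq (Fin n → ℤ) x (@HAdd.hAdd (Fin n → ℤ) (Fin n → ℤ) (Fin n → ℤ) instHAdd z
        (∑ t : Fin (n + 1), (γ.count t : ℤ) • stdStep n t)) := by
   intro z x γ
   induction γ with
   | nil => simp [TypedQuiver.Path.count]; exact (add_zero (M := Fin n → ℤ) _).symm
   | cons e γ ih =>
    show e.1 + stdStep n e.2 = _
    have hcount : ∀ t, (((TypedQuiver.Path.cons e γ).count t : ℕ) : ℤ)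
        = (γ.count t : ℤ) + (if e.2 = t then 1 else 0) := by
      intro t
      have h1 : (TypedQuiver.Path.cons e γ).count t
          = γ.count t + if (stdQuiver n).typ e = t then 1 else 0 := by
        simp [TypedQuiver.Path.count]
      have h2 : (stdQuiver n).typ e = e.2 := rfl
      rw [h1, h2]
      push_cast
      ring
    have ih' : e.1 = @HAdd.hAdd (Fin n → ℤ) (Fin n → ℤ) (Fin n → ℤ) instHAdd z
        (∑ t : Fin (n + 1), (γ.count t : ℤ) • stdStep n t) := ih
    rw [ih']
    simp only [hcount, add_smul, Finset.sum_add_distrib, ite_smul, one_smul, zero_smul,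
      Finset.sum_ite_eq, Finset.mem_univ, if_true]
    abel
  exact key γ

lemma cone_coord {n : ℕ} {I : Set (Fin (n + 1))} {z x : Fin n → ℤ} (hx : x ∈ cone I z) :
    ∃ c : Fin (n + 1) → ℕ, (∀ t ∉ I, c t = 0) ∧
      ∀ i : Fin n, x i = z i + (c i.succ : ℤ) - (c 0 : ℤ) := by
  obtain ⟨γ, hγ⟩ := hx
  refine ⟨γ.count, hγ, fun i => ?_⟩
  have h := congrFun (path_disp γ) i
  have hsum : (∑ t : Fin (n + 1), (γ.count t : ℤ) • stdStep n t) i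
      = (γ.count i.succ : ℤ) - (γ.count 0 : ℤ) := by
    rw [Finset.sum_apply]
    rw [Fin.sum_univ_succ]
    have h0 : ((γ.count 0 : ℤ) • stdStep n 0) i = -(γ.count 0 : ℤ) := by
      simp [stdStep]
    have h1 : ∀ j : Fin n, ((γ.count j.succ : ℤ) • stdStep n j.succ) i
        = if j = i then (γ.count i.succ : ℤ) else 0 := by
      intro j
      have hne : (j.succ : Fin (n + 1)) ≠ 0 := Fin.succ_ne_zero j
      by_cases hji : j = i
      · subst hji; simp [stdStep, hne]
      · have hv : (j : ℕ) ≠ (i : ℕ) := fun h => hji (Fin.ext h)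
        simp [stdStep, hne, Fin.val_succ, hv, hji]
    rw [h0]
    rw [Finset.sum_congr rfl fun j _ => h1 j]
    simp
    ring
  rw [h, Pi.add_apply, hsum]
  ring

/-- In the standard `ℤⁿ`-quiver, given vertices `z₀,…,z_m` and sets of
arrow types `I₀,…,I_m` with empty total intersection, the intersection of the cones
`C_{I_j}(z_j)` is finite. -/
theorem stmt3 (n m : ℕ) (z : Fin (m + 1) → (Fin n → ℤ))
    (I : Fin (m + 1) → Set (Fin (n + 1))) (hI : (⋂ j, I j) = ∅) :
    (⋂ j, cone (I j) (z j)).Finite := by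
  have hex : ∀ t : Fin (n + 1), ∃ j, t ∉ I j := by
    intro t
    by_contra h
    push_neg at h
    have : t ∈ ⋂ j, I j := Set.mem_iInter.mpr h
    rw [hI] at this
    exact this
  choose j hj using hex
  have hfin : (Set.pi Set.univ fun i : Fin n =>
      Set.Icc (z (j 0) i) (z (j i.succ) i)).Finite :=
    Set.Finite.pi fun i => Set.finite_Icc _ _
  refine hfin.subset ?_
  intro x hx
  rw [Set.mem_iInter] at hx
  intro i _
  constructor
  · obtain ⟨c, hc0, hc⟩ := cone_coord (hx (j 0))
    have := hc i
    rw [hc0 0 (hj 0)] at this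
    simp at this
    rw [this]
    simp
  · obtain ⟨c, hc0, hc⟩ := cone_coord (hx (j i.succ))
    have := hc i
    rw [hc0 i.succ (hj i.succ)] at this
    simp at this
    rw [this]
    simp
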